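/- Assume Hypothesis (H1) holds. Then there exist s₀ > 0 such that g is strictly increasing on [s₀,∞) (so the inverse g⁻¹ : [g(s₀),∞) → [s₀,∞) is defined), γ₀ ≥ 2·s₀ and C > 0 such that for all γ ≥ γ₀ and all η with 0 ≤ η ≤ g(γ) − g(γ/2): |g⁻¹(g(γ) − η) − (γ − η/g'(γ))| ≤ C·η²·g''(γ)/g'(γ)³. -/

import Mathlib

open Filter

set_option maxHeartbeats 1000000 in
/-- Proposition 3.2 (iii): under (H1), for large `γ` and `0 ≤ η ≤ g(γ) - g(γ/2)`,
the inverse value `g⁻¹(g(γ) - η)` (i.e. the unique `x ≥ s₀` with `g(x) = g(γ) - η`)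
satisfies `g⁻¹(g(γ)-η) = γ - η/g'(γ) + O(η² g''(γ)/g'(γ)³)`. -/
theorem inverse_expansion
    (n : ℕ) (hn : 2 ≤ n) (q a : ℝ) (hq1 : 1 < q) (hq2 : q ≤ (n : ℝ) / ((n : ℝ) - 1))
    (ha : 0 < a)
    (g g' g'' g''' ρ ρ' ρ'' ρ''' : ℝ → ℝ)
    (hgd1 : ∀ x > (0 : ℝ), HasDerivAt g (g' x) x)
    (hgd2 : ∀ x > (0 : ℝ), HasDerivAt g' (g'' x) x)
    (hgd3 : ∀ x > (0 : ℝ), HasDerivAt g'' (g''' x) x)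
    (hgc : ContinuousOn g''' (Set.Ioi 0))
    (hρd1 : ∀ x > (0 : ℝ), HasDerivAt ρ (ρ' x) x)
    (hρd2 : ∀ x > (0 : ℝ), HasDerivAt ρ' (ρ'' x) x)
    (hρd3 : ∀ x > (0 : ℝ), HasDerivAt ρ'' (ρ''' x) x)
    (hρc : ContinuousOn ρ''' (Set.Ioi 0))
    (hgform : ∀ x > (0 : ℝ), g x = a * x ^ q + ρ x)
    -- Hypothesis (H1)
    (H1_0 : Tendsto (fun s => ρ s / s ^ q) atTop (nhds 0))
    (H1_1 : Tendsto (fun s => ρ' s / s ^ (q - 1)) atTop (nhds 0))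
    (H1_2 : Tendsto (fun s => ρ'' s / s ^ (q - 2)) atTop (nhds 0))
    (H1_3 : Tendsto (fun s => ρ''' s / s ^ (q - 3)) atTop (nhds 0)) :
    ∃ s₀ > (0 : ℝ), StrictMonoOn g (Set.Ici s₀) ∧
      ∃ γ₀ : ℝ, 2 * s₀ ≤ γ₀ ∧ ∃ C > (0 : ℝ), ∀ γ ≥ γ₀, ∀ η : ℝ,
        0 ≤ η → η ≤ g γ - g (γ / 2) →
        ∃ x : ℝ, s₀ ≤ x ∧ g x = g γ - η ∧
          |x - (γ - η / g' γ)| ≤ C * η ^ 2 * g'' γ / (g' γ) ^ 3 := by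
  have hq0 : 0 < q := lt_trans one_pos hq1
  have hn1 : (1:ℝ) ≤ (n:ℝ) - 1 := by
    have : (2:ℝ) ≤ (n:ℝ) := by exact_mod_cast hn
    linarith
  have hq2' : q ≤ 2 := by
    refine hq2.trans ?_
    rw [div_le_iff₀ (by linarith : (0:ℝ) < (n:ℝ) - 1)]
    linarith
  set K1 := a * q with hK1def
  set K2 := a * q * (q - 1) with hK2def
  have hK1 : 0 < K1 := by positivity
  have hK2 : 0 < K2 := by
    have : 0 < q - 1 := by linarith
    positivity
  -- first derivative formula
  have hg'eq : ∀ x > (0:ℝ), g' x = K1 * x ^ (q-1) + ρ' x := by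
    intro x hx
    have h1 : HasDerivAt (fun y : ℝ => y ^ q) (q * x ^ (q-1)) x :=
      Real.hasDerivAt_rpow_const (Or.inl hx.ne')
    have hf : HasDerivAt (fun y => a * y ^ q + ρ y) (K1 * x ^ (q-1) + ρ' x) x := by
      have := (h1.const_mul a).add (hρd1 x hx)
      exact this.congr_deriv (by rw [hK1def]; ring)
    have h2 : HasDerivAt g (K1 * x ^ (q-1) + ρ' x) x := by
      refine hf.congr_of_eventuallyEq ?_
      filter_upwards [Ioi_mem_nhds hx] with y hy using hgform y hy
    exact (hgd1 x hx).unique h2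
  -- second derivative formula
  have hg''eq : ∀ x > (0:ℝ), g'' x = K2 * x ^ (q-2) + ρ'' x := by
    intro x hx
    have h1 : HasDerivAt (fun y : ℝ => y ^ (q-1)) ((q-1) * x ^ (q-2)) x := by
      have := Real.hasDerivAt_rpow_const (x := x) (p := q - 1) (Or.inl hx.ne')
      convert this using 2
      ring
    have hf : HasDerivAt (fun y => K1 * y ^ (q-1) + ρ' y) (K2 * x ^ (q-2) + ρ'' x) x := by
      have := (h1.const_mul K1).add (hρd2 x hx)
      exact this.congr_deriv (by rw [hK2def, hK1def]; ring)
    have h2 : HasDerivAt g' (K2 * x ^ (q-2) + ρ'' x) x := by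
      refine hf.congr_of_eventuallyEq ?_
      filter_upwards [Ioi_mem_nhds hx] with y hy using hg'eq y hy
    exact (hgd2 x hx).unique h2
  -- eventual bounds from (H1)
  have hb1 : ∀ᶠ s in atTop, |ρ' s| ≤ K1/2 * s ^ (q-1) := by
    have h := Metric.tendsto_nhds.mp H1_1 (K1/2) (by positivity)
    filter_upwards [h, eventually_gt_atTop (0:ℝ)] with s hs hs0
    rw [Real.dist_eq, sub_zero, abs_div,
      abs_of_pos (Real.rpow_pos_of_pos hs0 (q-1))] at hs
    have hp := Real.rpow_pos_of_pos hs0 (q-1)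
    calc |ρ' s| = |ρ' s| / s ^ (q-1) * s ^ (q-1) := by field_simp
      _ ≤ K1/2 * s ^ (q-1) := mul_le_mul_of_nonneg_right hs.le hp.le
  have hb2 : ∀ᶠ s in atTop, |ρ'' s| ≤ K2/2 * s ^ (q-2) := by
    have h := Metric.tendsto_nhds.mp H1_2 (K2/2) (by positivity)
    filter_upwards [h, eventually_gt_atTop (0:ℝ)] with s hs hs0
    rw [Real.dist_eq, sub_zero, abs_div,
      abs_of_pos (Real.rpow_pos_of_pos hs0 (q-2))] at hs
    have hp := Real.rpow_pos_of_pos hs0 (q-2)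
    calc |ρ'' s| = |ρ'' s| / s ^ (q-2) * s ^ (q-2) := by field_simp
      _ ≤ K2/2 * s ^ (q-2) := mul_le_mul_of_nonneg_right hs.le hp.le
  obtain ⟨N, hN⟩ := Filter.eventually_atTop.mp (hb1.and hb2)
  set s₀ := max N 1 with hs₀def
  have hs₀pos : (0:ℝ) < s₀ := lt_of_lt_of_le one_pos (le_max_right _ _)
  have hxpos : ∀ x : ℝ, s₀ ≤ x → 0 < x := fun x hx => lt_of_lt_of_le hs₀pos hx
  have hbound : ∀ x : ℝ, s₀ ≤ x → |ρ' x| ≤ K1/2 * x ^ (q-1) ∧ |ρ'' x| ≤ K2/2 * x ^ (q-2) :=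
    fun x hx => hN x (le_trans (le_max_left _ _) hx)
  -- bounds for g', g''
  have hg'lb : ∀ x : ℝ, s₀ ≤ x → K1/2 * x ^ (q-1) ≤ g' x := by
    intro x hx
    rw [hg'eq x (hxpos x hx)]
    have h := (abs_le.mp (hbound x hx).1).1
    linarith
  have hg'ub : ∀ x : ℝ, s₀ ≤ x → g' x ≤ 3/2 * K1 * x ^ (q-1) := by
    intro x hx
    rw [hg'eq x (hxpos x hx)]
    have h := (abs_le.mp (hbound x hx).1).2
    linarith
  have hg''lb : ∀ x : ℝ, s₀ ≤ x → K2/2 * x ^ (q-2) ≤ g'' x := by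
    intro x hx
    rw [hg''eq x (hxpos x hx)]
    have h := (abs_le.mp (hbound x hx).2).1
    linarith
  have hg''ub : ∀ x : ℝ, s₀ ≤ x → g'' x ≤ 3/2 * K2 * x ^ (q-2) := by
    intro x hx
    rw [hg''eq x (hxpos x hx)]
    have h := (abs_le.mp (hbound x hx).2).2
    linarith
  have hg'pos : ∀ x : ℝ, s₀ ≤ x → 0 < g' x := by
    intro x hx
    refine lt_of_lt_of_le ?_ (hg'lb x hx)
    have := Real.rpow_pos_of_pos (hxpos x hx) (q-1)
    positivity
  have hg''pos : ∀ x : ℝ, s₀ ≤ x → 0 < g'' x := by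
    intro x hx
    refine lt_of_lt_of_le ?_ (hg''lb x hx)
    have := Real.rpow_pos_of_pos (hxpos x hx) (q-2)
    positivity
  -- strict monotonicity
  have hmono : StrictMonoOn g (Set.Ici s₀) := by
    apply strictMonoOn_of_deriv_pos (convex_Ici s₀)
    · exact fun y hy => (hgd1 y (hxpos y hy)).continuousAt.continuousWithinAt
    · intro y hy
      rw [interior_Ici] at hy
      rw [(hgd1 y (hxpos y hy.le)).deriv]
      exact hg'pos y hy.le
  refine ⟨s₀, hs₀pos, hmono, 2 * s₀, le_refl _, 216, by norm_num, ?_⟩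
  intro γ hγ η hη0 hη1
  have hγ2 : s₀ ≤ γ / 2 := by linarith
  have hγs : s₀ ≤ γ := by linarith
  have hγpos : 0 < γ := hxpos γ hγs
  have hγ2pos : 0 < γ / 2 := by linarith
  -- existence of x via IVT
  have hcont : ContinuousOn g (Set.Icc (γ/2) γ) := fun y hy =>
    (hgd1 y (lt_of_lt_of_le hγ2pos hy.1)).continuousAt.continuousWithinAt
  have hivt := intermediate_value_Icc (by linarith : γ/2 ≤ γ) hcont
  have hmem : g γ - η ∈ Set.Icc (g (γ/2)) (g γ) := ⟨by linarith, by linarith⟩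
  obtain ⟨x, hxmem, hgx⟩ := hivt hmem
  obtain ⟨hx1, hx2⟩ := hxmem
  have hxs₀ : s₀ ≤ x := le_trans hγ2 hx1
  refine ⟨x, hxs₀, hgx, ?_⟩
  rcases eq_or_lt_of_le hx2 with heq | hlt
  · -- x = γ forces η = 0
    have hη : η = 0 := by
      rw [heq] at hgx; linarith
    rw [heq, hη]
    simp
  -- x < γ
  have hη_pos : 0 < η := by
    by_contra h
    push_neg at h
    have hη : η = 0 := le_antisymm h hη0
    have : g x < g γ := hmono (Set.mem_Ici.mpr hxs₀) (Set.mem_Ici.mpr hγs) hlt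
    rw [hgx, hη] at this; linarith
  obtain ⟨ξ, hξmem, hξ⟩ := exists_hasDerivAt_eq_slope g g' hlt
    (fun y hy => (hgd1 y (lt_of_lt_of_le (hxpos x hxs₀) hy.1)).continuousAt.continuousWithinAt)
    (fun y hy => hgd1 y (lt_trans (hxpos x hxs₀) hy.1))
  have hξs₀ : s₀ ≤ ξ := le_trans hxs₀ hξmem.1.le
  have hBpos : 0 < g' ξ := hg'pos ξ hξs₀
  have hApos : 0 < g' γ := hg'pos γ hγs
  have hslope : g γ - g x = η := by rw [hgx]; ring
  have hgap : 0 < γ - x := by linarith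
  have hγx : γ - x = η / g' ξ := by
    rw [eq_div_iff hBpos.ne']
    have : g' ξ * (γ - x) = η := by
      rw [hξ, hslope]
      field_simp
    linarith [this]
  -- second MVT for g'
  have hξγ : ξ < γ := hξmem.2
  obtain ⟨ζ, hζmem, hζ⟩ := exists_hasDerivAt_eq_slope g' g'' hξγ
    (fun y hy => (hgd2 y (lt_of_lt_of_le (hxpos ξ hξs₀) hy.1)).continuousAt.continuousWithinAt)
    (fun y hy => hgd2 y (lt_trans (hxpos ξ hξs₀) hy.1))
  have hζs₀ : s₀ ≤ ζ := le_trans hξs₀ hζmem.1.le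
  have hgapξ : 0 < γ - ξ := by linarith
  have hAB : g' γ - g' ξ = g'' ζ * (γ - ξ) := by
    rw [hζ]; field_simp
  have hDnn : 0 ≤ g'' ζ := (hg''pos ζ hζs₀).le
  have hEpos : 0 < g'' γ := hg''pos γ hγs
  -- the key identity
  have hstep : x - (γ - η / g' γ) = -(η * g'' ζ * (γ - ξ) / (g' γ * g' ξ)) := by
    have h1 : x - (γ - η / g' γ) = η / g' γ - (γ - x) := by ring
    rw [h1, hγx]
    rw [div_sub_div _ _ hApos.ne' hBpos.ne']
    rw [show η * g' ξ - g' γ * η = -(η * (g' γ - g' ξ)) by ring, hAB]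
    field_simp
  have habs : |x - (γ - η / g' γ)| = η * g'' ζ * (γ - ξ) / (g' γ * g' ξ) := by
    rw [hstep, abs_neg, abs_of_nonneg]
    apply div_nonneg _ (by positivity)
    exact mul_nonneg (mul_nonneg hη0 hDnn) hgapξ.le
  -- comparison bounds on [γ/2, γ]
  have hpow1 : (γ/2) ^ (q-1) ≤ ξ ^ (q-1) :=
    Real.rpow_le_rpow hγ2pos.le (le_trans hx1 hξmem.1.le) (by linarith)
  have hpow2 : ζ ^ (q-2) ≤ (γ/2) ^ (q-2) :=
    Real.rpow_le_rpow_of_nonpos hγ2pos (le_trans (le_trans hx1 hξmem.1.le) hζmem.1.le)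
      (by linarith)
  have hdiv1 : (γ/2 : ℝ) ^ (q-1) = γ ^ (q-1) / 2 ^ (q-1) :=
    Real.div_rpow hγpos.le (by norm_num) _
  have hdiv2 : (γ/2 : ℝ) ^ (q-2) = γ ^ (q-2) / 2 ^ (q-2) :=
    Real.div_rpow hγpos.le (by norm_num) _
  have h2q1 : (2:ℝ) ^ (q-1) ≤ 2 := by
    have := Real.rpow_le_rpow_of_exponent_le one_le_two (by linarith : q - 1 ≤ 1)
    rwa [Real.rpow_one] at this
  have h2q1pos : (0:ℝ) < 2 ^ (q-1) := Real.rpow_pos_of_pos two_pos _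
  have h2q2 : (1/2 : ℝ) ≤ 2 ^ (q-2) := by
    have := Real.rpow_le_rpow_of_exponent_le one_le_two (by linarith : (-1:ℝ) ≤ q - 2)
    rwa [Real.rpow_neg_one, show ((2:ℝ)⁻¹ = 1/2) by norm_num] at this
  have hγp1 : (0:ℝ) < γ ^ (q-1) := Real.rpow_pos_of_pos hγpos _
  have hγp2 : (0:ℝ) < γ ^ (q-2) := Real.rpow_pos_of_pos hγpos _
  have hhalf1 : γ ^ (q-1) / 2 ≤ (γ/2) ^ (q-1) := by
    rw [hdiv1]
    gcongr
  have hhalf2 : (γ/2) ^ (q-2) ≤ 2 * γ ^ (q-2) := by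
    rw [hdiv2]
    rw [div_le_iff₀ (by positivity : (0:ℝ) < 2 ^ (q-2))]
    linarith [mul_le_mul_of_nonneg_left h2q2 hγp2.le]
  -- g' ξ is comparable to g' γ, g'' ζ comparable to g'' γ
  have hB_lb : K1/4 * γ ^ (q-1) ≤ g' ξ := by
    have h1 : K1/2 * (γ/2) ^ (q-1) ≤ K1/2 * ξ ^ (q-1) :=
      mul_le_mul_of_nonneg_left hpow1 (by positivity)
    have h2 : K1/2 * (γ ^ (q-1) / 2) ≤ K1/2 * (γ/2) ^ (q-1) :=
      mul_le_mul_of_nonneg_left hhalf1 (by positivity)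
    have h3 := hg'lb ξ hξs₀
    have h4 : K1/4 * γ ^ (q-1) = K1/2 * (γ ^ (q-1) / 2) := by ring
    linarith
  have hA6B : g' γ ≤ 6 * g' ξ := by
    have h1 := hg'ub γ hγs
    have h2 : 3/2 * K1 * γ ^ (q-1) ≤ 6 * (K1/4 * γ ^ (q-1)) := by ring_nf; linarith [mul_pos hK1 hγp1]
    linarith
  have hD6E : g'' ζ ≤ 6 * g'' γ := by
    have h1 := hg''ub ζ hζs₀
    have h2 : 3/2 * K2 * ζ ^ (q-2) ≤ 3/2 * K2 * (γ/2) ^ (q-2) :=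
      mul_le_mul_of_nonneg_left hpow2 (by positivity)
    have h3 : 3/2 * K2 * (γ/2) ^ (q-2) ≤ 3/2 * K2 * (2 * γ ^ (q-2)) :=
      mul_le_mul_of_nonneg_left hhalf2 (by positivity)
    have h4 := hg''lb γ hγs
    have h5 : 3/2 * K2 * (2 * γ ^ (q-2)) = 6 * (K2/2 * γ ^ (q-2)) := by ring
    linarith
  -- final chain
  have hABpos : 0 < g' γ * g' ξ := mul_pos hApos hBpos
  calc |x - (γ - η / g' γ)|
      = η * g'' ζ * (γ - ξ) / (g' γ * g' ξ) := habs
    _ ≤ η * g'' ζ * (γ - x) / (g' γ * g' ξ) := by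
        refine (div_le_div_iff_of_pos_right hABpos).mpr ?_
        exact mul_le_mul_of_nonneg_left (by linarith [hξmem.1] : γ - ξ ≤ γ - x)
          (mul_nonneg hη0 hDnn)
    _ = η ^ 2 * g'' ζ / (g' γ * g' ξ ^ 2) := by
        rw [hγx]
        field_simp
    _ ≤ η ^ 2 * (6 * g'' γ) / (g' γ * (g' γ ^ 2 / 36)) := by
        have h36 : g' γ ^ 2 / 36 ≤ g' ξ ^ 2 := by
          have hsq : g' γ ^ 2 ≤ (6 * g' ξ) ^ 2 := pow_le_pow_left₀ hApos.le hA6B 2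
          have hsq' : (6 * g' ξ) ^ 2 = 36 * g' ξ ^ 2 := by ring
          linarith
        have hd : (0:ℝ) < g' γ * (g' γ ^ 2 / 36) := by positivity
        have hnum : η ^ 2 * g'' ζ ≤ η ^ 2 * (6 * g'' γ) :=
          mul_le_mul_of_nonneg_left hD6E (sq_nonneg η)
        have hden : g' γ * (g' γ ^ 2 / 36) ≤ g' γ * g' ξ ^ 2 :=
          mul_le_mul_of_nonneg_left h36 hApos.le
        exact div_le_div₀ (by positivity) hnum hd hden
    _ = 216 * η ^ 2 * g'' γ / g' γ ^ 3 := by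
        field_simp
        ring
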